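/- Let θ₂, θ₃, θ₂', θ₃' > 0 and let 0 < r₁ < r₂. If g(r₁; θ₂, θ₃) = g(r₁; θ₂', θ₃') and g(r₂; θ₂, θ₃) = g(r₂; θ₂', θ₃'), then θ₂ = θ₂' and θ₃ = θ₃'. In particular, the map (θ₂, θ₃) ↦ g(·; θ₂, θ₃) from (0,∞)² to functions on (0,∞) is injective, and agreement at any two distinct positive radii suffices. -/

import Mathlib

/-- The Lennard-Jones pair potential with parameters θ₂, θ₃. -/
noncomputable def gLJ (θ₂ θ₃ r : ℝ) : ℝ := 4 * θ₂ * ((θ₃ / r) ^ 12 - (θ₃ / r) ^ 6)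

theorem stmt10 (θ₂ θ₃ θ₂' θ₃' r₁ r₂ : ℝ) (h2 : 0 < θ₂) (h3 : 0 < θ₃)
    (h2' : 0 < θ₂') (h3' : 0 < θ₃') (hr₁ : 0 < r₁) (hr : r₁ < r₂)
    (e1 : gLJ θ₂ θ₃ r₁ = gLJ θ₂' θ₃' r₁) (e2 : gLJ θ₂ θ₃ r₂ = gLJ θ₂' θ₃' r₂) :
    θ₂ = θ₂' ∧ θ₃ = θ₃' := by
  have hr₂ : 0 < r₂ := hr₁.trans hr
  have hr₁0 : r₁ ≠ 0 := ne_of_gt hr₁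
  have hr₂0 : r₂ ≠ 0 := ne_of_gt hr₂
  unfold gLJ at e1 e2
  field_simp at e1 e2
  have f1 : θ₂ * θ₃ ^ 12 - θ₂ * θ₃ ^ 6 * r₁ ^ 6 =
      θ₂' * θ₃' ^ 12 - θ₂' * θ₃' ^ 6 * r₁ ^ 6 := by
    refine mul_left_cancel₀ (a := 4 * r₁ ^ 6) (by positivity) ?_
    linear_combination (4 * r₁ ^ 6) * e1
  have f2 : θ₂ * θ₃ ^ 12 - θ₂ * θ₃ ^ 6 * r₂ ^ 6 =
      θ₂' * θ₃' ^ 12 - θ₂' * θ₃' ^ 6 * r₂ ^ 6 := by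
    refine mul_left_cancel₀ (a := 4 * r₂ ^ 6) (by positivity) ?_
    linear_combination (4 * r₂ ^ 6) * e2
  have hrlt : r₁ ^ 6 < r₂ ^ 6 := pow_lt_pow_left₀ hr hr₁.le (by norm_num)
  have hB : θ₂ * θ₃ ^ 6 = θ₂' * θ₃' ^ 6 := by
    have key : (θ₂ * θ₃ ^ 6 - θ₂' * θ₃' ^ 6) * (r₂ ^ 6 - r₁ ^ 6) = 0 := by
      linear_combination f1 - f2
    rcases mul_eq_zero.mp key with h | h
    · linarith
    · linarith
  have hA : θ₂ * θ₃ ^ 12 = θ₂' * θ₃' ^ 12 := by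
    linear_combination f1 + r₁ ^ 6 * hB
  have h6 : θ₃ ^ 6 = θ₃' ^ 6 := by
    have hpos : 0 < θ₂ * θ₃ ^ 6 := by positivity
    have h : (θ₂ * θ₃ ^ 6) * θ₃ ^ 6 = (θ₂ * θ₃ ^ 6) * θ₃' ^ 6 := by
      calc (θ₂ * θ₃ ^ 6) * θ₃ ^ 6 = θ₂ * θ₃ ^ 12 := by ring
        _ = θ₂' * θ₃' ^ 12 := hA
        _ = (θ₂' * θ₃' ^ 6) * θ₃' ^ 6 := by ring
        _ = (θ₂ * θ₃ ^ 6) * θ₃' ^ 6 := by rw [hB]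
    exact mul_left_cancel₀ (ne_of_gt hpos) h
  have h33 : θ₃ = θ₃' := by
    rcases lt_trichotomy θ₃ θ₃' with h | h | h
    · exfalso; have := pow_lt_pow_left₀ h h3.le (n := 6) (by norm_num); linarith
    · exact h
    · exfalso; have := pow_lt_pow_left₀ h h3'.le (n := 6) (by norm_num); linarith
  refine ⟨?_, h33⟩
  have h3pos : (0:ℝ) < θ₃ ^ 6 := by positivity
  have h : θ₂ * θ₃ ^ 6 = θ₂' * θ₃ ^ 6 := by rw [hB, h33]
  exact mul_right_cancel₀ (ne_of_gt h3pos) h
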